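/- arXiv:1610.05466 — 3 statements merged into one kernel-verified Lean document; each statement's English description precedes it below -/
import Mathlib

section
/- A connected simple graph G is a partial cube if and only if it can be obtained from the one-vertex graph K_1 by a finite sequence of expansions. -/
open SimpleGraph

/-- The hypercube graph `Q_d` on `{0,1}^d`: two vertices are adjacent iff they
differ in exactly one coordinate. -/
def hypercubeGraph (d : ℕ) : SimpleGraph (Fin d → Bool) where
  Adj x y := hammingDist x y = 1
  symm := by
    constructor
    intro x y h
    rwa [hammingDist_comm]
  loopless := by
    constructor
    intro x h
    simp [hammingDist_self] at h

/-- A partial cube: a connected simple graph admitting an isometric embedding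
into some hypercube. -/
def IsPartialCube {V : Type} (G : SimpleGraph V) : Prop :=
  G.Connected ∧
    ∃ (d : ℕ) (φ : V → (Fin d → Bool)), Function.Injective φ ∧
      ∀ v w : V, (hypercubeGraph d).dist (φ v) (φ w) = G.dist v w

/-- A subgraph is isometric if distances within it coincide with distances in
the ambient graph. -/
def IsIsometricSubgraph {V : Type} {G : SimpleGraph V} (G' : G.Subgraph) : Prop :=
  ∀ u v : G'.verts, G'.coe.dist u v = G.dist u.val v.val

/-- The expansion graph of `G` with respect to two subgraphs `G₁, G₂`: take
disjoint copies of `G₁` and `G₂` and join the two copies of each vertex of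
`G₁ ∩ G₂` by a matching edge. -/
def expansionGraph {V : Type} {G : SimpleGraph V} (G₁ G₂ : G.Subgraph) :
    SimpleGraph (↥G₁.verts ⊕ ↥G₂.verts) where
  Adj a b :=
    match a, b with
    | Sum.inl u, Sum.inl v => G₁.Adj u v
    | Sum.inr u, Sum.inr v => G₂.Adj u v
    | Sum.inl u, Sum.inr v => (u : V) = (v : V)
    | Sum.inr u, Sum.inl v => (u : V) = (v : V)
  symm := by
    constructor
    rintro (u | u) (v | v) h
    · exact G₁.symm.symm _ _ h
    · exact h.symm
    · exact h.symm
    · exact G₂.symm.symm _ _ h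
  loopless := by
    constructor
    rintro (u | u) h
    · exact G.loopless.irrefl _ (G₁.adj_sub h)
    · exact G.loopless.irrefl _ (G₂.adj_sub h)

/-- `H` is the expansion of `G` with respect to the subgraphs `G₁` and `G₂`:
they are isometric, cover `G` (vertices and edges), have non-empty
intersection, and `H` is isomorphic to the resulting expansion graph. -/
structure IsExpansionWrt {V W : Type} (H : SimpleGraph W) (G : SimpleGraph V)
    (G₁ G₂ : G.Subgraph) : Prop where
  isometric₁ : IsIsometricSubgraph G₁
  isometric₂ : IsIsometricSubgraph G₂
  covers : G₁ ⊔ G₂ = ⊤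
  inter_nonempty : (G₁.verts ∩ G₂.verts).Nonempty
  iso : Nonempty (H ≃g expansionGraph G₁ G₂)

/-- `H` is an expansion of `G` (with respect to some admissible pair of
subgraphs). -/
def IsExpansionOf {V W : Type} (H : SimpleGraph W) (G : SimpleGraph V) : Prop :=
  ∃ G₁ G₂ : G.Subgraph, IsExpansionWrt H G G₁ G₂

/-- Graphs obtainable from the one-vertex graph `K₁` by a finite sequence of
expansions. -/
inductive ObtainableByExpansions : ∀ {V : Type}, SimpleGraph V → Prop
  | single {V : Type} (G : SimpleGraph V) (h : ∃ v : V, ∀ w : V, w = v) :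
      ObtainableByExpansions G
  | expand {V W : Type} {G : SimpleGraph V} {H : SimpleGraph W}
      (hG : ObtainableByExpansions G) (hH : IsExpansionOf H G) :
      ObtainableByExpansions H


open Finset

section HammingLemmas

variable {ι : Type*} [Fintype ι] [DecidableEq ι]

lemma hamming_erase (a a' c : ι → Bool) (j : ι) (hk : ∀ k ≠ j, a k = a' k)
    (hj : a j ≠ c j) (hj' : a' j = c j) : hammingDist a' c + 1 = hammingDist a c := by
  have hset : ({i | a' i ≠ c i} : Finset ι) = ({i | a i ≠ c i} : Finset ι).erase j := by
    ext k
    by_cases hkj : k = j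
    · subst hkj; simp [hj'] 
    · simp [Finset.mem_erase, hkj, hk k hkj]
  have hmem : j ∈ ({i | a i ≠ c i} : Finset ι) := by simp [hj]
  show #{i | a' i ≠ c i} + 1 = #{i | a i ≠ c i}
  rw [hset, Finset.card_erase_add_one hmem]

lemma hamming_insert (a a' c : ι → Bool) (j : ι) (hk : ∀ k ≠ j, a k = a' k)
    (hj : a j = c j) (hj' : a' j ≠ c j) : hammingDist a' c = hammingDist a c + 1 := by
  have hset : ({i | a' i ≠ c i} : Finset ι) = insert j ({i | a i ≠ c i} : Finset ι) := by
    ext k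
    by_cases hkj : k = j
    · subst hkj; simp [hj']
    · simp [Finset.mem_insert, hkj, hk k hkj]
  have hmem : j ∉ ({i | a i ≠ c i} : Finset ι) := by simp [hj]
  show #{i | a' i ≠ c i} = #{i | a i ≠ c i} + 1
  rw [hset, Finset.card_insert_of_notMem hmem]

lemma hamming_single (a c : ι → Bool) (j : ι) (hk : ∀ k ≠ j, a k = c k)
    (hj : a j ≠ c j) : hammingDist a c = 1 := by
  have hset : ({i | a i ≠ c i} : Finset ι) = {j} := by
    ext k
    by_cases hkj : k = j
    · subst hkj; simp [hj]
    · simp [hkj, hk k hkj]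
  show #{i | a i ≠ c i} = 1
  rw [hset, Finset.card_singleton]

/-- extract the unique differing coordinate from a Hamming-distance-1 pair -/
lemma hamming_one_elim {a c : ι → Bool} (h : hammingDist a c = 1) :
    ∃ j, a j ≠ c j ∧ ∀ k ≠ j, a k = c k := by
  obtain ⟨j, hj⟩ := Finset.card_eq_one.mp h
  refine ⟨j, ?_, ?_⟩
  · have : j ∈ ({i | a i ≠ c i} : Finset ι) := hj ▸ Finset.mem_singleton_self j
    simpa using this
  · intro k hk
    by_contra hne
    have : k ∈ ({i | a i ≠ c i} : Finset ι) := by simpa using hne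
    rw [hj, Finset.mem_singleton] at this
    exact hk this
end HammingLemmas

section CastSucc

variable {d : ℕ}

lemma hamming_castSucc_decomp (a b : Fin (d+1) → Bool) :
    hammingDist a b = hammingDist (fun j : Fin d => a j.castSucc) (fun j : Fin d => b j.castSucc)
      + (if a (Fin.last d) = b (Fin.last d) then 0 else 1) := by
  show #{i | a i ≠ b i} = #{i | _} + _
  rw [Finset.card_filter, Finset.card_filter, Fin.sum_univ_castSucc]
  simp only []
  by_cases h : a (Fin.last d) = b (Fin.last d) <;> simp [h]

end CastSucc

section WalkLemmas
variable {V W : Type} {G : SimpleGraph V} {H : SimpleGraph W}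

/-- Map a walk through a map that sends edges to edges or collapses them. -/
lemma exists_walk_le_of_pseudo (f : V → W)
    (hf : ∀ a b, G.Adj a b → f a = f b ∨ H.Adj (f a) (f b)) :
    ∀ {u v : V} (p : G.Walk u v), ∃ q : H.Walk (f u) (f v), q.length ≤ p.length := by
  intro u v p
  induction p with
  | nil => exact ⟨.nil, le_rfl⟩
  | cons h p ih =>
    obtain ⟨q, hq⟩ := ih
    rcases hf _ _ h with heq | hadj
    · exact ⟨q.copy heq.symm rfl, by simpa using hq.trans (Nat.le_succ _)⟩
    · exact ⟨q.cons hadj, by simpa using Nat.succ_le_succ hq⟩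

lemma hamming_le_length {n : ℕ} (f : V → Fin n → Bool)
    (hf : ∀ a b, G.Adj a b → hammingDist (f a) (f b) ≤ 1) :
    ∀ {u v : V} (p : G.Walk u v), hammingDist (f u) (f v) ≤ p.length := by
  intro u v p
  induction p with
  | nil => simp
  | cons h p ih =>
    calc hammingDist (f _) (f _) ≤ hammingDist (f _) (f _) + hammingDist (f _) (f _) :=
          hammingDist_triangle _ _ _
    _ ≤ 1 + p.length := Nat.add_le_add (hf _ _ h) ih
    _ = (p.cons h).length := by simp [SimpleGraph.Walk.length_cons, Nat.add_comm]

end WalkLemmas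

section Hypercube
variable {d : ℕ}

lemma exists_hypercube_walk (x y : Fin d → Bool) :
    ∃ p : (hypercubeGraph d).Walk x y, p.length = hammingDist x y := by
  generalize hn : hammingDist x y = n
  induction n generalizing x with
  | zero => obtain rfl := eq_of_hammingDist_eq_zero hn; exact ⟨.nil, rfl⟩
  | succ n ih =>
    have hne : x ≠ y := by intro h; rw [h, hammingDist_self] at hn; omega
    have : ∃ j, x j ≠ y j := by
      by_contra hc
      push_neg at hc
      exact hne (funext hc)
    obtain ⟨j, hj⟩ := this
    set x' := Function.update x j (y j) with hx'
    have hkk : ∀ k ≠ j, x' k = x k := fun k hk => Function.update_of_ne hk _ _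
    have h1 : hammingDist x' y + 1 = hammingDist x y := by
      refine hamming_erase x x' y j (fun k hk => (hkk k hk).symm) hj ?_
      rw [hx']; exact Function.update_self j (y j) x
    have hadj : (hypercubeGraph d).Adj x x' := by
      show hammingDist x x' = 1
      refine hamming_single x x' j (fun k hk => (hkk k hk).symm) ?_
      rw [hx', Function.update_self]; exact hj
    obtain ⟨p, hp⟩ := ih x' (by omega)
    exact ⟨p.cons hadj, by simp only [SimpleGraph.Walk.length_cons, hp]⟩

lemma hypercube_dist (x y : Fin d → Bool) :
    (hypercubeGraph d).dist x y = hammingDist x y := by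
  obtain ⟨p, hp⟩ := exists_hypercube_walk x y
  refine le_antisymm (hp ▸ SimpleGraph.dist_le p) ?_
  have hr : (hypercubeGraph d).Reachable x y := ⟨p⟩
  obtain ⟨q, hq⟩ := hr.exists_walk_length_eq_dist
  calc hammingDist x y = hammingDist (id x) (id y) := by simp
  _ ≤ q.length := hamming_le_length (G := hypercubeGraph d) id (fun a b h => le_of_eq h) q
  _ = _ := hq

lemma hypercube_connected (d : ℕ) : (hypercubeGraph d).Connected := by
  constructor
  · intro x y; exact ⟨(exists_hypercube_walk x y).choose⟩

section Expansion
variable {V : Type} {G : SimpleGraph V}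

/-- In an isometric subgraph of a connected graph, between any two vertices there is a
walk realizing the ambient distance. -/
lemma coe_walk_of_isometric {G₁ : G.Subgraph} (hiso : IsIsometricSubgraph G₁)
    (hconn : G.Connected) (u v : G₁.verts) :
    ∃ p : G₁.coe.Walk u v, p.length = G.dist u.val v.val := by
  by_cases huv : u = v
  · subst huv
    exact ⟨.nil, (SimpleGraph.dist_self).symm⟩
  · have hval : u.val ≠ v.val := fun h => huv (Subtype.ext h)
    have hpos : 0 < G.dist u.val v.val := hconn.pos_dist_of_ne hval
    have hco : G₁.coe.dist u v = G.dist u.val v.val := hiso u v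
    have hne : G₁.coe.dist u v ≠ 0 := by omega
    have hreach : G₁.coe.Reachable u v := SimpleGraph.Reachable.of_dist_ne_zero hne
    obtain ⟨p, hp⟩ := hreach.exists_walk_length_eq_dist
    exact ⟨p, by rw [hp, hco]⟩

/-- Crossing lemma: along any walk from `G₁` to `G₂`, there is a vertex in both. -/
lemma exists_common_vertex {G₁ G₂ : G.Subgraph} (hcov : G₁ ⊔ G₂ = ⊤) (hconn : G.Connected) :
    ∀ {u v : V} (p : G.Walk u v), u ∈ G₁.verts → v ∈ G₂.verts →
      ∃ w ∈ G₁.verts ∩ G₂.verts, G.dist u w + G.dist w v ≤ p.length := by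
  intro u v p
  induction p with
  | nil =>
    intro hu hv
    refine ⟨_, ⟨hu, hv⟩, ?_⟩
    have h0 : G.dist u u = 0 := SimpleGraph.dist_self
    simp [h0]
  | @cons u u₁ v h p ih =>
    intro hu hv
    by_cases hu2 : u ∈ G₂.verts
    · refine ⟨u, ⟨hu, hu2⟩, ?_⟩
      have hle := SimpleGraph.dist_le (p.cons h)
      have h0 : G.dist u u = 0 := SimpleGraph.dist_self
      simp only [SimpleGraph.Walk.length_cons] at hle ⊢
      omega
    · have hadj : (G₁ ⊔ G₂).Adj u u₁ := by rw [hcov]; exact SimpleGraph.Subgraph.top_adj.mpr h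
      rcases SimpleGraph.Subgraph.sup_adj.mp hadj with h1 | h2
      · obtain ⟨w, hw, hd⟩ := ih h1.snd_mem hv
        refine ⟨w, hw, ?_⟩
        have ht : G.dist u w ≤ G.dist u u₁ + G.dist u₁ w := hconn.dist_triangle
        have h1' : G.dist u u₁ = 1 := SimpleGraph.dist_eq_one_iff_adj.mpr h
        simp only [SimpleGraph.Walk.length_cons]
        omega
      · exact absurd h2.fst_mem hu2

variable (G₁ G₂ : G.Subgraph)

/-- projection from the expansion graph back to `G`. -/
def expProj : (↥G₁.verts ⊕ ↥G₂.verts) → V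
  | Sum.inl u => u.val
  | Sum.inr u => u.val

lemma expProj_pseudo : ∀ a b, (expansionGraph G₁ G₂).Adj a b →
    expProj G₁ G₂ a = expProj G₁ G₂ b ∨ G.Adj (expProj G₁ G₂ a) (expProj G₁ G₂ b) := by
  rintro (a | a) (b | b) h
  · exact Or.inr (G₁.adj_sub h)
  · exact Or.inl h
  · exact Or.inl h
  · exact Or.inr (G₂.adj_sub h)

/-- the `inl` homomorphism -/
def expInl : G₁.coe →g expansionGraph G₁ G₂ where
  toFun := Sum.inl
  map_rel' h := h

def expInr : G₂.coe →g expansionGraph G₁ G₂ where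
  toFun := Sum.inr
  map_rel' h := h

end Expansion

section Snoc
variable {d : ℕ}

lemma hamming_snoc (x y : Fin d → Bool) (b c : Bool) :
    hammingDist (Fin.snoc x b : Fin (d+1) → Bool) (Fin.snoc y c)
      = hammingDist x y + if b = c then 0 else 1 := by
  rw [hamming_castSucc_decomp]
  congr 1
  · congr 1 <;> · funext j; simp [Fin.snoc_castSucc]
  · simp [Fin.snoc_last]

lemma snoc_inj {x y : Fin d → Bool} {b c : Bool}
    (h : (Fin.snoc x b : Fin (d+1) → Bool) = Fin.snoc y c) : x = y ∧ b = c := by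
  constructor
  · funext j
    have := congrFun h j.castSucc
    simpa [Fin.snoc_castSucc] using this
  · have := congrFun h (Fin.last d)
    simpa [Fin.snoc_last] using this
end Snoc

section IsoTransfer
variable {V W : Type} {G : SimpleGraph V} {H : SimpleGraph W}

lemma iso_connected (e : G ≃g H) (hconn : G.Connected) : H.Connected := by
  have hne : Nonempty V := hconn.nonempty
  obtain ⟨v⟩ := hne
  have : Nonempty W := ⟨e v⟩
  refine ⟨fun a b => ?_⟩
  have h1 : G.Reachable (e.symm a) (e.symm b) := hconn.preconnected _ _
  have h2 : H.Reachable (e (e.symm a)) (e (e.symm b)) := h1.map e.toHom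
  simpa using h2

lemma iso_dist (e : G ≃g H) (hconn : G.Connected) (u v : V) :
    G.dist u v = H.dist (e u) (e v) := by
  refine le_antisymm ?_ ?_
  · have hr : H.Reachable (e u) (e v) := (hconn.preconnected u v).map e.toHom
    obtain ⟨q, hq⟩ := hr.exists_walk_length_eq_dist
    calc G.dist u v ≤ ((q.map e.symm.toHom).copy (by simp) (by simp)).length :=
          SimpleGraph.dist_le _
    _ = q.length := by simp
    _ = _ := hq
  · obtain ⟨p, hp⟩ := (hconn.preconnected u v).exists_walk_length_eq_dist
    calc H.dist (e u) (e v) ≤ (p.map e.toHom).length := SimpleGraph.dist_le _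
    _ = p.length := by simp
    _ = _ := hp

end IsoTransfer

section ExpPC
variable {V : Type} {G : SimpleGraph V} {G₁ G₂ : G.Subgraph}

/-- the canonical embedding of the expansion graph into one more cube dimension -/
def expEmb (φ : V → Fin d → Bool) : (↥G₁.verts ⊕ ↥G₂.verts) → Fin (d+1) → Bool
  | Sum.inl u => Fin.snoc (φ u.val) false
  | Sum.inr u => Fin.snoc (φ u.val) true

lemma expansion_isPartialCube {W : Type} {H : SimpleGraph W}
    (hPC : IsPartialCube G) (hexp : IsExpansionWrt H G G₁ G₂) : IsPartialCube H := by
  obtain ⟨hconn, d, φ, hinj, hdist⟩ := hPC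
  obtain ⟨e⟩ := hexp.iso
  have hdG : ∀ u v, G.dist u v = hammingDist (φ u) (φ v) := by
    intro u v
    rw [← hdist u v, hypercube_dist]
  set E := expansionGraph G₁ G₂ with hE
  set ψ : (↥G₁.verts ⊕ ↥G₂.verts) → Fin (d+1) → Bool := expEmb φ with hψ
  -- hamming values of ψ
  have hadj_ham : ∀ a b, E.Adj a b → hammingDist (ψ a) (ψ b) ≤ 1 := by
    rintro (a | a) (b | b) hab
    · have h1 : G.Adj a.val b.val := G₁.adj_sub hab
      have : hammingDist (φ a.val) (φ b.val) = 1 := by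
        rw [← hdG]; exact SimpleGraph.dist_eq_one_iff_adj.mpr h1
      simp [hψ, expEmb, hamming_snoc, this]
    · have : (a : V) = (b : V) := hab
      simp [hψ, expEmb, hamming_snoc, this]
    · have : (a : V) = (b : V) := hab
      simp [hψ, expEmb, hamming_snoc, this]
    · have h1 : G.Adj a.val b.val := G₂.adj_sub hab
      have : hammingDist (φ a.val) (φ b.val) = 1 := by
        rw [← hdG]; exact SimpleGraph.dist_eq_one_iff_adj.mpr h1
      simp [hψ, expEmb, hamming_snoc, this]
  have hlow : ∀ a b, hammingDist (ψ a) (ψ b) ≤ E.dist a b → True := fun _ _ _ => trivial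
  -- lower bound: hamming ≤ any walk length, so if reachable, hamming ≤ dist
  have hham_le_dist : ∀ a b, E.Reachable a b → hammingDist (ψ a) (ψ b) ≤ E.dist a b := by
    intro a b hr
    obtain ⟨q, hq⟩ := hr.exists_walk_length_eq_dist
    exact hq ▸ hamming_le_length ψ hadj_ham q
  -- upper bounds
  have keyAA : ∀ (u v : ↥G₁.verts), E.dist (Sum.inl u) (Sum.inl v) ≤ G.dist u.val v.val := by
    intro u v
    obtain ⟨p, hp⟩ := coe_walk_of_isometric hexp.isometric₁ hconn u v
    calc E.dist _ _ ≤ (p.map (expInl G₁ G₂)).length := SimpleGraph.dist_le _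
    _ = p.length := by simp
    _ = _ := hp
  have keyBB : ∀ (u v : ↥G₂.verts), E.dist (Sum.inr u) (Sum.inr v) ≤ G.dist u.val v.val := by
    intro u v
    obtain ⟨p, hp⟩ := coe_walk_of_isometric hexp.isometric₂ hconn u v
    calc E.dist _ _ ≤ (p.map (expInr G₁ G₂)).length := SimpleGraph.dist_le _
    _ = p.length := by simp
    _ = _ := hp
  have keyAB : ∀ (u : ↥G₁.verts) (v : ↥G₂.verts),
      E.dist (Sum.inl u) (Sum.inr v) ≤ G.dist u.val v.val + 1 := by
    intro u v
    obtain ⟨p, hp⟩ := (hconn.preconnected u.val v.val).exists_walk_length_eq_dist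
    obtain ⟨w, ⟨hw1, hw2⟩, hd⟩ := exists_common_vertex hexp.covers hconn p u.2 v.2
    obtain ⟨q1, hq1⟩ := coe_walk_of_isometric hexp.isometric₁ hconn u ⟨w, hw1⟩
    obtain ⟨q2, hq2⟩ := coe_walk_of_isometric hexp.isometric₂ hconn ⟨w, hw2⟩ v
    have hedge : E.Adj (Sum.inl ⟨w, hw1⟩) (Sum.inr ⟨w, hw2⟩) := rfl
    have e1 : ((⟨w, hw1⟩ : ↥G₁.verts) : V) = w := rfl
    have e2 : ((⟨w, hw2⟩ : ↥G₂.verts) : V) = w := rfl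
    rw [e1] at hq1
    rw [e2] at hq2
    calc E.dist _ _ ≤ ((q1.map (expInl G₁ G₂)).append (SimpleGraph.Walk.cons hedge
          (q2.map (expInr G₁ G₂)))).length := SimpleGraph.dist_le _
    _ = q1.length + (q2.length + 1) := by
        simp [SimpleGraph.Walk.length_append, SimpleGraph.Walk.length_cons]
        exact congrArg (· + 1) (SimpleGraph.Walk.length_map _ _)
    _ ≤ G.dist u.val v.val + 1 := by rw [hq1, hq2]; omega
  -- connectivity of E
  obtain ⟨w₀, hw₀1, hw₀2⟩ := hexp.inter_nonempty
  have hhub : ∀ a, E.Reachable a (Sum.inl ⟨w₀, hw₀1⟩) := by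
    rintro (u | u)
    · obtain ⟨p, _⟩ := coe_walk_of_isometric hexp.isometric₁ hconn u ⟨w₀, hw₀1⟩
      exact ⟨p.map (expInl G₁ G₂)⟩
    · obtain ⟨p, _⟩ := coe_walk_of_isometric hexp.isometric₂ hconn u ⟨w₀, hw₀2⟩
      have hedge : E.Adj (Sum.inr ⟨w₀, hw₀2⟩) (Sum.inl ⟨w₀, hw₀1⟩) := rfl
      exact ⟨(p.map (expInr G₁ G₂)).append (SimpleGraph.Walk.cons hedge .nil)⟩
  have hconnE : E.Connected := by
    have : Nonempty (↥G₁.verts ⊕ ↥G₂.verts) := ⟨Sum.inl ⟨w₀, hw₀1⟩⟩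
    exact ⟨fun a b => (hhub a).trans (hhub b).symm⟩
  -- exact distances
  have hdistE : ∀ a b, E.dist a b = hammingDist (ψ a) (ψ b) := by
    rintro (a | a) (b | b)
    · refine le_antisymm ?_ (hham_le_dist _ _ (hconnE.preconnected _ _))
      have : hammingDist (ψ (Sum.inl a)) (ψ (Sum.inl b)) = G.dist a.val b.val := by
        simp [hψ, expEmb, hamming_snoc, hdG]
      rw [this]; exact keyAA a b
    · refine le_antisymm ?_ (hham_le_dist _ _ (hconnE.preconnected _ _))
      have : hammingDist (ψ (Sum.inl a)) (ψ (Sum.inr b)) = G.dist a.val b.val + 1 := by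
        simp [hψ, expEmb, hamming_snoc, hdG]
      rw [this]; exact keyAB a b
    · refine le_antisymm ?_ (hham_le_dist _ _ (hconnE.preconnected _ _))
      have : hammingDist (ψ (Sum.inr a)) (ψ (Sum.inl b)) = G.dist a.val b.val + 1 := by
        simp [hψ, expEmb, hamming_snoc, hdG, hammingDist_comm]
      rw [this]
      rw [SimpleGraph.dist_comm, SimpleGraph.dist_comm (u := a.val)] at *
      exact keyAB b a
    · refine le_antisymm ?_ (hham_le_dist _ _ (hconnE.preconnected _ _))
      have : hammingDist (ψ (Sum.inr a)) (ψ (Sum.inr b)) = G.dist a.val b.val := by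
        simp [hψ, expEmb, hamming_snoc, hdG]
      rw [this]; exact keyBB a b
  -- injectivity of ψ
  have hinjψ : Function.Injective ψ := by
    rintro (a | a) (b | b) hab
    · obtain ⟨h1, _⟩ := snoc_inj hab
      exact congrArg Sum.inl (Subtype.ext (hinj h1))
    · exact absurd (snoc_inj hab).2 (by simp)
    · exact absurd (snoc_inj hab).2 (by simp)
    · obtain ⟨h1, _⟩ := snoc_inj hab
      exact congrArg Sum.inr (Subtype.ext (hinj h1))
  -- transfer through the iso
  refine ⟨iso_connected e.symm hconnE, d+1, fun w => ψ (e w), ?_, ?_⟩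
  · intro a b hab
    exact e.injective (hinjψ hab)
  · intro a b
    rw [hypercube_dist, ← hdistE (e a) (e b)]
    exact (iso_dist e (iso_connected e.symm hconnE) a b).symm

section Contraction
variable {d : ℕ} {V : Type}

/-- drop the last coordinate -/
def pcProj (φ : V → Fin (d+1) → Bool) : V → Fin d → Bool := fun v j => φ v j.castSucc

/-- vertices of the contracted graph -/
abbrev PCVert (φ : V → Fin (d+1) → Bool) : Type := {x : Fin d → Bool // ∃ v, pcProj φ v = x}

variable (G : SimpleGraph V) (φ : V → Fin (d+1) → Bool)

/-- the contracted graph -/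
def pcGraph : SimpleGraph (PCVert φ) where
  Adj x y := x ≠ y ∧ ∃ a b, G.Adj a b ∧ pcProj φ a = x.val ∧ pcProj φ b = y.val
  symm := by constructor; rintro x y ⟨hne, a, b, hab, ha, hb⟩; exact ⟨hne.symm, b, a, hab.symm, hb, ha⟩
  loopless := by constructor; rintro x ⟨hne, -⟩; exact hne rfl

/-- the two halves of the contracted graph -/
def pcSub (b : Bool) : (pcGraph G φ).Subgraph where
  verts := {x | ∃ v, φ v (Fin.last d) = b ∧ pcProj φ v = x.val}
  Adj x y := x ≠ y ∧ ∃ a a', G.Adj a a' ∧ φ a (Fin.last d) = b ∧ φ a' (Fin.last d) = b ∧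
    pcProj φ a = x.val ∧ pcProj φ a' = y.val
  adj_sub := by rintro x y ⟨hne, a, a', h, _, _, ha, ha'⟩; exact ⟨hne, a, a', h, ha, ha'⟩
  edge_vert := by rintro x y ⟨hne, a, a', h, hb, hb', ha, ha'⟩; exact ⟨a, hb, ha⟩
  symm := by
    constructor
    rintro x y ⟨hne, a, a', h, hb, hb', ha, ha'⟩
    exact ⟨hne.symm, a', a, h.symm, hb', hb, ha', ha⟩

variable {G φ}

lemma bool_eq_of_two_ne {x y z : Bool} (h1 : x ≠ y) (h2 : x ≠ z) : y = z := by
  revert h1 h2; revert x y z; decide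

lemma pc_decomp (u v : V) :
    hammingDist (φ u) (φ v) = hammingDist (pcProj φ u) (pcProj φ v)
      + (if φ u (Fin.last d) = φ v (Fin.last d) then 0 else 1) :=
  hamming_castSucc_decomp _ _

lemma pc_adj1 (hdG : ∀ u v, G.dist u v = hammingDist (φ u) (φ v)) {a b : V}
    (h : G.Adj a b) : hammingDist (φ a) (φ b) = 1 := by
  rw [← hdG]; exact SimpleGraph.dist_eq_one_iff_adj.mpr h

lemma pc_ham_le (hdG : ∀ u v, G.dist u v = hammingDist (φ u) (φ v)) {u v : V}
    (p : G.Walk u v) : hammingDist (φ u) (φ v) ≤ p.length :=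
  hamming_le_length φ (fun a b hab => le_of_eq (pc_adj1 hdG hab)) p

/-- the step lemma for geodesics -/
lemma pc_step (hdG : ∀ u v, G.dist u v = hammingDist (φ u) (φ v)) {u u₁ v : V}
    (h : G.Adj u u₁) (p : G.Walk u₁ v)
    (hlen : p.length + 1 = hammingDist (φ u) (φ v)) :
    hammingDist (φ u₁) (φ v) = p.length ∧
      ∃ j, φ u j ≠ φ u₁ j ∧ φ u j ≠ φ v j ∧ ∀ k ≠ j, φ u k = φ u₁ k := by
  have h1 : hammingDist (φ u) (φ u₁) = 1 := pc_adj1 hdG h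
  have hle : hammingDist (φ u₁) (φ v) ≤ p.length := pc_ham_le hdG p
  have htri : hammingDist (φ u) (φ v) ≤ hammingDist (φ u) (φ u₁) + hammingDist (φ u₁) (φ v) :=
    hammingDist_triangle _ _ _
  have heq : hammingDist (φ u₁) (φ v) = p.length := by omega
  obtain ⟨j, hj, hk⟩ := hamming_one_elim h1
  refine ⟨heq, j, hj, ?_, hk⟩
  intro hjv
  have hj' : φ u₁ j ≠ φ v j := fun hcon => hj (hjv.trans hcon.symm)
  have := hamming_insert (φ u) (φ u₁) (φ v) j hk hjv hj'
  omega

/-- lifting geodesics to the contracted graph -/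
lemma pcLift (hdG : ∀ u v, G.dist u v = hammingDist (φ u) (φ v)) :
    ∀ {u v : V} (p : G.Walk u v), p.length = hammingDist (φ u) (φ v) →
    ∃ q : (pcGraph G φ).Walk ⟨pcProj φ u, u, rfl⟩ ⟨pcProj φ v, v, rfl⟩,
      q.length = hammingDist (pcProj φ u) (pcProj φ v) := by
  intro u v p
  induction p with
  | nil =>
    intro _
    exact ⟨.nil, by simp [hammingDist_self]⟩
  | @cons u u₁ v h p ih =>
    intro hp
    rw [SimpleGraph.Walk.length_cons] at hp
    obtain ⟨heq, j, hj, hjv, hk⟩ := pc_step hdG h p hp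
    obtain ⟨q, hq⟩ := ih heq.symm
    by_cases hjlast : j = Fin.last d
    · have hproj : pcProj φ u = pcProj φ u₁ := by
        funext k
        exact hk k.castSucc (by rw [hjlast]; exact (Fin.castSucc_lt_last k).ne)
      refine ⟨q.copy (Subtype.ext hproj.symm) rfl, ?_⟩
      rw [SimpleGraph.Walk.length_copy, hq, hproj]
    · obtain ⟨j', rfl⟩ := Fin.exists_castSucc_eq.mpr hjlast
      have hprojne : pcProj φ u ≠ pcProj φ u₁ := fun hcon => hj (congrFun hcon j')
      have hadj : (pcGraph G φ).Adj ⟨pcProj φ u, u, rfl⟩ ⟨pcProj φ u₁, u₁, rfl⟩ :=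
        ⟨fun hcon => hprojne (congrArg Subtype.val hcon), u, u₁, h, rfl, rfl⟩
      refine ⟨q.cons hadj, ?_⟩
      have hham : hammingDist (pcProj φ u₁) (pcProj φ v) + 1
          = hammingDist (pcProj φ u) (pcProj φ v) := by
        refine hamming_erase (pcProj φ u) (pcProj φ u₁) (pcProj φ v) j' ?_ hjv ?_
        · intro k hkj
          exact hk k.castSucc (fun hcon => hkj (Fin.castSucc_injective _ hcon))
        · exact bool_eq_of_two_ne hj hjv
      rw [SimpleGraph.Walk.length_cons, hq]
      omega

/-- lifting geodesics staying on one side to the half subgraphs -/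
lemma pcLiftb (hdG : ∀ u v, G.dist u v = hammingDist (φ u) (φ v)) (b : Bool) :
    ∀ {u v : V} (p : G.Walk u v), p.length = hammingDist (φ u) (φ v) →
    ∀ (hu : φ u (Fin.last d) = b) (hv : φ v (Fin.last d) = b),
    ∃ q : (pcSub G φ b).coe.Walk ⟨⟨pcProj φ u, u, rfl⟩, u, hu, rfl⟩
        ⟨⟨pcProj φ v, v, rfl⟩, v, hv, rfl⟩,
      q.length = hammingDist (pcProj φ u) (pcProj φ v) := by
  intro u v p
  induction p with
  | nil =>
    intro _ hu hv
    exact ⟨.nil, by simp [hammingDist_self]⟩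
  | @cons u u₁ v h p ih =>
    intro hp hu hv
    rw [SimpleGraph.Walk.length_cons] at hp
    obtain ⟨heq, j, hj, hjv, hk⟩ := pc_step hdG h p hp
    have hjlast : j ≠ Fin.last d := by
      intro hcon
      subst hcon
      exact hjv (hu.trans hv.symm)
    have hu₁ : φ u₁ (Fin.last d) = b :=
      (hk (Fin.last d) (fun e => hjlast e.symm)).symm.trans hu
    obtain ⟨q, hq⟩ := ih heq.symm hu₁ hv
    obtain ⟨j', rfl⟩ := Fin.exists_castSucc_eq.mpr hjlast
    have hprojne : pcProj φ u ≠ pcProj φ u₁ := fun hcon => hj (congrFun hcon j')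
    have hadj : (pcSub G φ b).coe.Adj ⟨⟨pcProj φ u, u, rfl⟩, u, hu, rfl⟩
        ⟨⟨pcProj φ u₁, u₁, rfl⟩, u₁, hu₁, rfl⟩ := by
      show (pcSub G φ b).Adj _ _
      exact ⟨fun hcon => hprojne (congrArg Subtype.val hcon), u, u₁, h, hu, hu₁, rfl, rfl⟩
    refine ⟨q.cons hadj, ?_⟩
    have hham : hammingDist (pcProj φ u₁) (pcProj φ v) + 1
        = hammingDist (pcProj φ u) (pcProj φ v) := by
      refine hamming_erase (pcProj φ u) (pcProj φ u₁) (pcProj φ v) j' ?_ hjv ?_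
      · intro k hkj
        exact hk k.castSucc (fun hcon => hkj (Fin.castSucc_injective _ hcon))
      · exact bool_eq_of_two_ne hj hjv
    rw [SimpleGraph.Walk.length_cons, hq]
    omega

lemma pc_adj_ham (hdG : ∀ u v, G.dist u v = hammingDist (φ u) (φ v)) :
    ∀ x y : PCVert φ, (pcGraph G φ).Adj x y → hammingDist x.val y.val ≤ 1 := by
  rintro x y ⟨hne, a, b, hab, ha, hb⟩
  have h1 : hammingDist (φ a) (φ b) = 1 := pc_adj1 hdG hab
  have hde := pc_decomp (φ := φ) a b
  have hproj : hammingDist (pcProj φ a) (pcProj φ b) ≤ 1 := by omega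
  rwa [ha, hb] at hproj

lemma pc_reachable (hconn : G.Connected)
    (hdG : ∀ u v, G.dist u v = hammingDist (φ u) (φ v)) (x y : PCVert φ) :
    (pcGraph G φ).Reachable x y := by
  obtain ⟨u, hu⟩ := x.2
  obtain ⟨v, hv⟩ := y.2
  obtain ⟨p, hp⟩ := (hconn.preconnected u v).exists_walk_length_eq_dist
  obtain ⟨q, _⟩ := pcLift hdG p (by rw [hp, hdG])
  exact ⟨q.copy (Subtype.ext hu) (Subtype.ext hv)⟩

lemma pc_connected (hconn : G.Connected)
    (hdG : ∀ u v, G.dist u v = hammingDist (φ u) (φ v)) : (pcGraph G φ).Connected := by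
  obtain ⟨v⟩ := hconn.nonempty
  have : Nonempty (PCVert φ) := ⟨⟨pcProj φ v, v, rfl⟩⟩
  exact ⟨fun x y => pc_reachable hconn hdG x y⟩

lemma pc_dist (hconn : G.Connected)
    (hdG : ∀ u v, G.dist u v = hammingDist (φ u) (φ v)) (x y : PCVert φ) :
    (pcGraph G φ).dist x y = hammingDist x.val y.val := by
  refine le_antisymm ?_ ?_
  · obtain ⟨u, hu⟩ := x.2
    obtain ⟨v, hv⟩ := y.2
    obtain ⟨p, hp⟩ := (hconn.preconnected u v).exists_walk_length_eq_dist
    obtain ⟨q, hq⟩ := pcLift hdG p (by rw [hp, hdG])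
    calc (pcGraph G φ).dist x y ≤ (q.copy (Subtype.ext hu) (Subtype.ext hv)).length :=
          SimpleGraph.dist_le _
    _ = hammingDist (pcProj φ u) (pcProj φ v) := by rw [SimpleGraph.Walk.length_copy, hq]
    _ = hammingDist x.val y.val := by rw [hu, hv]
  · obtain ⟨q, hq⟩ := (pc_reachable hconn hdG x y).exists_walk_length_eq_dist
    calc hammingDist x.val y.val ≤ q.length :=
          hamming_le_length Subtype.val (pc_adj_ham hdG) q
    _ = _ := hq

lemma pc_isometric (hconn : G.Connected)
    (hdG : ∀ u v, G.dist u v = hammingDist (φ u) (φ v)) (b : Bool) :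
    IsIsometricSubgraph (pcSub G φ b) := by
  intro x y
  obtain ⟨u, hu, hup⟩ := x.2
  obtain ⟨v, hv, hvp⟩ := y.2
  have hham : (pcSub G φ b).coe.dist x y ≤ hammingDist x.val.val y.val.val := by
    obtain ⟨p, hp⟩ := (hconn.preconnected u v).exists_walk_length_eq_dist
    obtain ⟨q, hq⟩ := pcLiftb hdG b p (by rw [hp, hdG]) hu hv
    calc (pcSub G φ b).coe.dist x y
        ≤ (q.copy (Subtype.ext (Subtype.ext hup)) (Subtype.ext (Subtype.ext hvp))).length :=
          SimpleGraph.dist_le _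
    _ = hammingDist (pcProj φ u) (pcProj φ v) := by rw [SimpleGraph.Walk.length_copy, hq]
    _ = _ := by rw [hup, hvp]
  have hpc : (pcGraph G φ).dist x.val y.val = hammingDist x.val.val y.val.val :=
    pc_dist hconn hdG x.val y.val
  rw [hpc]
  refine le_antisymm hham ?_
  have hrc : (pcSub G φ b).coe.Reachable x y := by
    obtain ⟨p, hp⟩ := (hconn.preconnected u v).exists_walk_length_eq_dist
    obtain ⟨q, _⟩ := pcLiftb hdG b p (by rw [hp, hdG]) hu hv
    exact ⟨q.copy (Subtype.ext (Subtype.ext hup)) (Subtype.ext (Subtype.ext hvp))⟩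
  obtain ⟨r, hr⟩ := hrc.exists_walk_length_eq_dist
  calc hammingDist x.val.val y.val.val
      ≤ (r.map (pcSub G φ b).hom).length :=
        hamming_le_length Subtype.val (pc_adj_ham hdG) _
  _ = r.length := SimpleGraph.Walk.length_map _ _
  _ = _ := hr

lemma pc_covers (hdG : ∀ u v, G.dist u v = hammingDist (φ u) (φ v)) :
    pcSub G φ false ⊔ pcSub G φ true = ⊤ := by
  refine SimpleGraph.Subgraph.ext ?_ ?_
  · rw [SimpleGraph.Subgraph.verts_sup, SimpleGraph.Subgraph.verts_top,
      Set.eq_univ_iff_forall]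
    intro x
    obtain ⟨v, hv⟩ := x.2
    rcases hb : φ v (Fin.last d) with _ | _
    · exact Set.mem_union_left _ ⟨v, hb, hv⟩
    · exact Set.mem_union_right _ ⟨v, hb, hv⟩
  · funext x y
    apply propext
    rw [SimpleGraph.Subgraph.sup_adj, SimpleGraph.Subgraph.top_adj]
    constructor
    · rintro (h | h)
      · exact (pcSub G φ false).adj_sub h
      · exact (pcSub G φ true).adj_sub h
    · rintro ⟨hne, a, b', hab, ha, hb'⟩
      have h1 : hammingDist (φ a) (φ b') = 1 := pc_adj1 hdG hab
      obtain ⟨j, hj, hk⟩ := hamming_one_elim h1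
      have hvalne : x.val ≠ y.val := fun hcon => hne (Subtype.ext hcon)
      have hex : ∃ j₀ : Fin d, pcProj φ a j₀ ≠ pcProj φ b' j₀ := by
        by_contra hcon
        push_neg at hcon
        exact hvalne (ha ▸ hb' ▸ funext hcon)
      obtain ⟨j₀, hj₀⟩ := hex
      have hjj : j₀.castSucc = j := by
        by_contra hcon
        exact hj₀ (hk j₀.castSucc hcon)
      have hjne : Fin.last d ≠ j := by
        rw [← hjj]
        exact (Fin.castSucc_lt_last j₀).ne'
      have hlast : φ a (Fin.last d) = φ b' (Fin.last d) := hk (Fin.last d) hjne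
      rcases hab0 : φ a (Fin.last d) with _ | _
      · exact Or.inl ⟨hne, a, b', hab, hab0, hab0 ▸ hlast.symm, ha, hb'⟩
      · exact Or.inr ⟨hne, a, b', hab, hab0, hab0 ▸ hlast.symm, ha, hb'⟩

lemma pc_cross (c : V → Bool) :
    ∀ {u v : V} (p : G.Walk u v), c u ≠ c v → ∃ a b, G.Adj a b ∧ c a ≠ c b := by
  intro u v p
  induction p with
  | nil => intro h; exact absurd rfl h
  | @cons u u₁ v h p ih =>
    intro hne
    by_cases hc : c u = c u₁
    · obtain ⟨a, b, hab, hcab⟩ := ih (fun e => hne (hc.trans e))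
      exact ⟨a, b, hab, hcab⟩
    · exact ⟨u, u₁, h, hc⟩

lemma pc_inter (hconn : G.Connected)
    (hdG : ∀ u v, G.dist u v = hammingDist (φ u) (φ v)) {u₀ v₀ : V}
    (hne : φ u₀ (Fin.last d) ≠ φ v₀ (Fin.last d)) :
    ((pcSub G φ false).verts ∩ (pcSub G φ true).verts).Nonempty := by
  obtain ⟨p⟩ := hconn.preconnected u₀ v₀
  obtain ⟨a, b, hab, hcab⟩ := pc_cross (fun w => φ w (Fin.last d)) p hne
  have h1 : hammingDist (φ a) (φ b) = 1 := pc_adj1 hdG hab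
  obtain ⟨j, hj, hk⟩ := hamming_one_elim h1
  have hjlast : j = Fin.last d := by
    by_contra hcon
    exact hcab (hk (Fin.last d) (fun e => hcon e.symm))
  have hproj : pcProj φ a = pcProj φ b := by
    funext k
    exact hk k.castSucc (by rw [hjlast]; exact (Fin.castSucc_lt_last k).ne)
  rcases hva : φ a (Fin.last d) with _ | _
  · have hvb : φ b (Fin.last d) = true := by
      have : φ a (Fin.last d) ≠ φ b (Fin.last d) := hcab
      rw [hva] at this
      exact Bool.of_not_eq_false (Ne.symm this)
    exact ⟨⟨pcProj φ a, a, rfl⟩, ⟨a, hva, rfl⟩, ⟨b, hvb, hproj.symm⟩⟩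
  · have hvb : φ b (Fin.last d) = false := by
      have : φ a (Fin.last d) ≠ φ b (Fin.last d) := hcab
      rw [hva] at this
      exact Bool.of_not_eq_true (Ne.symm this)
    exact ⟨⟨pcProj φ a, a, rfl⟩, ⟨b, hvb, hproj.symm⟩, ⟨a, hva, rfl⟩⟩

lemma pc_phi_eq (hinj : Function.Injective φ) {u v : V}
    (hlast : φ u (Fin.last d) = φ v (Fin.last d)) (hproj : pcProj φ u = pcProj φ v) :
    u = v :=
  hinj (funext fun k => Fin.lastCases hlast (fun k₀ => congrFun hproj k₀) k)

lemma pc_iso_nonempty (hinj : Function.Injective φ)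
    (hdG : ∀ u v, G.dist u v = hammingDist (φ u) (φ v)) :
    Nonempty (G ≃g expansionGraph (pcSub G φ false) (pcSub G φ true)) := by
  classical
  set F : V → (↥(pcSub G φ false).verts ⊕ ↥(pcSub G φ true).verts) := fun v =>
    if h : φ v (Fin.last d) = false then Sum.inl ⟨⟨pcProj φ v, v, rfl⟩, v, h, rfl⟩
    else Sum.inr ⟨⟨pcProj φ v, v, rfl⟩, v, Bool.of_not_eq_false h, rfl⟩ with hF
  -- the adjacency characterizations
  have hadj_same : ∀ (a b : V) (bb : Bool), φ a (Fin.last d) = bb → φ b (Fin.last d) = bb →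
      ((pcSub G φ bb).Adj ⟨pcProj φ a, a, rfl⟩ ⟨pcProj φ b, b, rfl⟩ ↔ G.Adj a b) := by
    intro a b bb ha hb
    constructor
    · rintro ⟨hne, a', b', hab', ha'l, hb'l, ha'p, hb'p⟩
      have ea : a' = a := pc_phi_eq hinj (ha'l.trans ha.symm) ha'p
      have eb : b' = b := pc_phi_eq hinj (hb'l.trans hb.symm) hb'p
      rw [← ea, ← eb]
      exact hab'
    · intro hab
      have h1 : hammingDist (φ a) (φ b) = 1 := pc_adj1 hdG hab
      obtain ⟨j, hj, hk⟩ := hamming_one_elim h1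
      have hjlast : j ≠ Fin.last d := by
        intro hcon
        subst hcon
        exact hj (ha.trans hb.symm)
      obtain ⟨j', rfl⟩ := Fin.exists_castSucc_eq.mpr hjlast
      have hprojne : pcProj φ a ≠ pcProj φ b := fun hcon => hj (congrFun hcon j')
      exact ⟨fun hcon => hprojne (congrArg Subtype.val hcon), a, b, hab, ha, hb, rfl, rfl⟩
  have hadj_cross : ∀ (a b : V), φ a (Fin.last d) ≠ φ b (Fin.last d) →
      ((⟨pcProj φ a, a, rfl⟩ : PCVert φ) = ⟨pcProj φ b, b, rfl⟩ ↔ G.Adj a b) := by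
    intro a b hne
    constructor
    · intro h
      have hproj : pcProj φ a = pcProj φ b := congrArg Subtype.val h
      have h1 : hammingDist (φ a) (φ b) = 1 := by
        refine hamming_single (φ a) (φ b) (Fin.last d) ?_ hne
        intro k hkl
        obtain ⟨k₀, rfl⟩ := Fin.exists_castSucc_eq.mpr hkl
        exact congrFun hproj k₀
      have : G.dist a b = 1 := by rw [hdG]; exact h1
      exact SimpleGraph.dist_eq_one_iff_adj.mp this
    · intro hab
      have h1 : hammingDist (φ a) (φ b) = 1 := pc_adj1 hdG hab
      obtain ⟨j, hj, hk⟩ := hamming_one_elim h1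
      have hjlast : j = Fin.last d := by
        by_contra hcon
        exact hne (hk (Fin.last d) (fun e => hcon e.symm))
      refine Subtype.ext (funext fun k => ?_)
      exact hk k.castSucc (by rw [hjlast]; exact (Fin.castSucc_lt_last k).ne)
  have hbij : Function.Bijective F := by
    constructor
    · intro a b hab
      by_cases ha : φ a (Fin.last d) = false <;> by_cases hb : φ b (Fin.last d) = false
      · rw [hF] at hab
        simp only [dif_pos ha, dif_pos hb, Sum.inl.injEq] at hab
        have hproj : pcProj φ a = pcProj φ b :=
          congrArg (fun z => z.val.val) hab
        exact pc_phi_eq hinj (ha.trans hb.symm) hproj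
      · rw [hF] at hab
        simp only [dif_pos ha, dif_neg hb] at hab
        exact absurd hab (by exact Sum.inl_ne_inr)
      · rw [hF] at hab
        simp only [dif_neg ha, dif_pos hb] at hab
        exact absurd hab (by exact Sum.inr_ne_inl)
      · rw [hF] at hab
        simp only [dif_neg ha, dif_neg hb, Sum.inr.injEq] at hab
        have hproj : pcProj φ a = pcProj φ b :=
          congrArg (fun z => z.val.val) hab
        exact pc_phi_eq hinj
          ((Bool.of_not_eq_false ha).trans (Bool.of_not_eq_false hb).symm) hproj
    · rintro (⟨x, hx⟩ | ⟨x, hx⟩)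
      · obtain ⟨v, hb, hproj⟩ := hx
        refine ⟨v, ?_⟩
        rw [hF]
        simp only [dif_pos hb]
        exact congrArg Sum.inl (Subtype.ext (Subtype.ext hproj))
      · obtain ⟨v, hb, hproj⟩ := hx
        refine ⟨v, ?_⟩
        rw [hF]
        have hb' : ¬ (φ v (Fin.last d) = false) := by rw [hb]; exact Bool.noConfusion
        simp only [dif_neg hb']
        exact congrArg Sum.inr (Subtype.ext (Subtype.ext hproj))
  refine ⟨⟨Equiv.ofBijective F hbij, ?_⟩⟩
  intro a b
  show (expansionGraph _ _).Adj (F a) (F b) ↔ G.Adj a b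
  by_cases ha : φ a (Fin.last d) = false <;> by_cases hb : φ b (Fin.last d) = false
  · rw [hF]
    simp only [dif_pos ha, dif_pos hb]
    exact hadj_same a b false ha hb
  · rw [hF]
    simp only [dif_pos ha, dif_neg hb]
    show ((⟨pcProj φ a, a, rfl⟩ : PCVert φ) = ⟨pcProj φ b, b, rfl⟩) ↔ _
    exact hadj_cross a b (by rw [ha, Bool.of_not_eq_false hb]; exact Bool.noConfusion)
  · rw [hF]
    simp only [dif_neg ha, dif_pos hb]
    show ((⟨pcProj φ a, a, rfl⟩ : PCVert φ) = ⟨pcProj φ b, b, rfl⟩) ↔ _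
    exact hadj_cross a b (by rw [hb, Bool.of_not_eq_false ha]; exact Bool.noConfusion)
  · rw [hF]
    simp only [dif_neg ha, dif_neg hb]
    exact hadj_same a b true (Bool.of_not_eq_false ha) (Bool.of_not_eq_false hb)

end Contraction

/-- Main induction: isometrically embedded connected graphs are obtainable. -/
lemma obtainable_of_embed : ∀ (d : ℕ) {V : Type} (G : SimpleGraph V), G.Connected →
    ∀ φ : V → Fin d → Bool, Function.Injective φ →
    (∀ u v, G.dist u v = hammingDist (φ u) (φ v)) → ObtainableByExpansions G := by
  intro d
  induction d with
  | zero =>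
    intro V G hconn φ hinj hdG
    obtain ⟨v⟩ := hconn.nonempty
    exact .single G ⟨v, fun w => hinj (funext fun j => j.elim0)⟩
  | succ d ih =>
    intro V G hconn φ hinj hdG
    by_cases hc : ∀ u v : V, φ u (Fin.last d) = φ v (Fin.last d)
    · refine ih G hconn (pcProj φ) ?_ ?_
      · intro u v huv
        exact hinj (funext fun k => Fin.lastCases (hc u v) (fun k₀ => congrFun huv k₀) k)
      · intro u v
        rw [hdG, pc_decomp u v, if_pos (hc u v), Nat.add_zero]
    · push_neg at hc
      obtain ⟨u₀, v₀, hne⟩ := hc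
      have hG' := ih (pcGraph G φ) (pc_connected hconn hdG) Subtype.val
        Subtype.val_injective (pc_dist hconn hdG)
      exact .expand hG' ⟨pcSub G φ false, pcSub G φ true,
        pc_isometric hconn hdG false, pc_isometric hconn hdG true, pc_covers hdG,
        pc_inter hconn hdG hne, pc_iso_nonempty hinj hdG⟩

/-- Obtainable graphs are partial cubes. -/
lemma obtainable_isPartialCube : ∀ {V : Type} {G : SimpleGraph V},
    ObtainableByExpansions G → IsPartialCube G := by
  intro V G h
  induction h with
  | single G hv =>
    obtain ⟨v, hv⟩ := hv
    have : Nonempty _ := ⟨v⟩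
    refine ⟨⟨fun a b => ?_⟩, 0, fun _ j => j.elim0, ?_, ?_⟩
    · have : a = b := (hv a).trans (hv b).symm
      subst this
      rfl
    · intro a b _
      exact (hv a).trans (hv b).symm
    · intro a b
      have : a = b := (hv a).trans (hv b).symm
      subst this
      rw [SimpleGraph.dist_self, SimpleGraph.dist_self]
  | expand hG hH ih =>
    obtain ⟨G₁, G₂, hexp⟩ := hH
    exact expansion_isPartialCube ih hexp

/-- A connected simple graph `G` is a partial cube if and only if it can be
obtained from the one-vertex graph `K₁` by a finite sequence of expansions. -/
theorem partialCube_iff_obtainableByExpansions {V : Type} (G : SimpleGraph V)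
    (hconn : G.Connected) :
    IsPartialCube G ↔ ObtainableByExpansions G := by
  constructor
  · rintro ⟨hconn', d, φ, hinj, hdist⟩
    exact obtainable_of_embed d G hconn' φ hinj
      (fun u v => by rw [← hdist u v, hypercube_dist])
  · intro h
    exact obtainable_isPartialCube h
end ExpPC
end Hypercube
end

section
/- If H is a partial cube and E_f is a Θ-class of H, then each of the two connected components of the graph H \ E_f obtained by deleting the edges of E_f, regarded as a subgraph of H with all induced edges, is an isometric subgraph of H and hence is itself a partial cube. -/
open SimpleGraph

/-- The Djoković–Winkler relation `Θ` on (unordered) edges: `e = xy` and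
`f = uv` are related iff `d(x,u) + d(y,v) ≠ d(x,v) + d(y,u)`. -/
def DWRel {V : Type} (G : SimpleGraph V) (e f : Sym2 V) : Prop :=
  ∃ x y u v : V, e = s(x, y) ∧ f = s(u, v) ∧
    G.dist x u + G.dist y v ≠ G.dist x v + G.dist y u

/-- A `Θ`-class of `G`: the set of all edges of `G` related to some fixed edge
`e` of `G` by the Djoković–Winkler relation. -/
def IsThetaClass {V : Type} (G : SimpleGraph V) (C : Set (Sym2 V)) : Prop :=
  ∃ e ∈ G.edgeSet, C = {f | f ∈ G.edgeSet ∧ DWRel G e f}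

/-- `0/1`-valued distance on booleans. -/
def d01 (a b : Bool) : ℕ := if a = b then 0 else 1

lemma d01_triangle (a b c : Bool) : d01 a c ≤ d01 a b + d01 b c := by
  cases a <;> cases b <;> cases c <;> simp [d01]

lemma d01_eq_zero {a b : Bool} (h : d01 a b = 0) : a = b := by
  cases a <;> cases b <;> simp_all [d01]

lemma d01_cross {p q r s : Bool} (h1 : p ≠ q) (h2 : r ≠ s) :
    d01 p r + d01 q s ≠ d01 p s + d01 q r := by
  cases p <;> cases q <;> cases r <;> cases s <;> simp_all [d01]

lemma hamming_eq_sum {d : ℕ} (x y : Fin d → Bool) :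
    hammingDist x y = ∑ j, d01 (x j) (y j) := by
  unfold hammingDist d01
  rw [Finset.card_filter]
  refine Finset.sum_congr rfl fun j _ => ?_
  by_cases h : x j = y j <;> simp [h]

lemma hyper_walk {d : ℕ} (n : ℕ) : ∀ (x y : Fin d → Bool), hammingDist x y = n →
    ∃ p : (hypercubeGraph d).Walk x y, p.length = n := by
  induction n with
  | zero =>
    intro x y h
    rw [hammingDist_eq_zero] at h
    subst h
    exact ⟨.nil, rfl⟩
  | succ n ih =>
    intro x y h
    have hne : x ≠ y := by
      intro he; subst he; simp [hammingDist_self] at h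
    obtain ⟨i, hi⟩ : ∃ i, x i ≠ y i := Function.ne_iff.mp hne
    set x' := Function.update x i (y i) with hx'
    have hfe : ∀ j, x' j ≠ y j ↔ (x j ≠ y j ∧ j ≠ i) := by
      intro j
      by_cases hj : j = i
      · subst hj; simp [hx']
      · simp [hx', Function.update_apply, hj]
    have hadj : (hypercubeGraph d).Adj x x' := by
      show hammingDist x x' = 1
      have : (Finset.univ.filter fun j => x j ≠ x' j) = {i} := by
        ext j
        by_cases hj : j = i
        · subst hj; simp [hx', hi]
        · simp [hx', Function.update_apply, hj]
      unfold hammingDist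
      rw [this, Finset.card_singleton]
    have hdx : hammingDist x' y = n := by
      have hset : (Finset.univ.filter fun j => x' j ≠ y j)
          = (Finset.univ.filter fun j => x j ≠ y j).erase i := by
        ext j
        simp only [Finset.mem_filter, Finset.mem_erase, Finset.mem_univ, true_and]
        rw [hfe j]
        tauto
      have hmem : i ∈ (Finset.univ.filter fun j => x j ≠ y j) := by simp [hi]
      have : hammingDist x' y = hammingDist x y - 1 := by
        unfold hammingDist
        rw [hset, Finset.card_erase_of_mem hmem]
      omega
    obtain ⟨p, hp⟩ := ih x' y hdx
    exact ⟨.cons hadj p, by simp [hp]⟩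

lemma hyper_dist_eq {d : ℕ} (x y : Fin d → Bool) :
    (hypercubeGraph d).dist x y = hammingDist x y := by
  obtain ⟨p, hp⟩ := hyper_walk (hammingDist x y) x y rfl
  refine le_antisymm (hp ▸ SimpleGraph.dist_le p) ?_
  obtain ⟨q, hq⟩ := SimpleGraph.Reachable.exists_walk_length_eq_dist ⟨p⟩
  rw [← hq]
  clear hp hq p
  induction q with
  | nil => simp [hammingDist_self]
  | @cons a b c h q ih =>
    have h1 : hammingDist a b = 1 := h
    calc hammingDist a c ≤ hammingDist a b + hammingDist b c := hammingDist_triangle _ _ _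
      _ ≤ 1 + q.length := by omega
      _ = (SimpleGraph.Walk.cons h q).length := by simp [SimpleGraph.Walk.length_cons]; omega

lemma walk_toInduce {V : Type} {G G' : SimpleGraph V} (hle : G ≤ G') (s : Set V) :
    ∀ {u v : V} (p : G.Walk u v) (_ : ∀ w ∈ p.support, w ∈ s)
      (hu : u ∈ s) (hv : v ∈ s),
    ∃ q : (G'.induce s).Walk ⟨u, hu⟩ ⟨v, hv⟩, q.length = p.length := by
  intro u v p
  induction p with
  | nil => intro _ hu hv; exact ⟨.nil, rfl⟩
  | @cons a b c h q ih =>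
    intro hsup hu hv
    have hb : b ∈ s := hsup b (by simp [SimpleGraph.Walk.support_cons])
    obtain ⟨q', hq'⟩ := ih (fun w hw => hsup w (by simp [SimpleGraph.Walk.support_cons, hw])) hb hv
    have hadj : (G'.induce s).Adj ⟨a, hu⟩ ⟨b, hb⟩ := hle h
    exact ⟨.cons hadj q', by simp [hq']⟩

/-- If `H` is a partial cube and `E_f` is a `Θ`-class of `H`, then each
connected component of `H \ E_f`, regarded as a subgraph of `H` with all
induced edges, is an isometric subgraph of `H` and is itself a partial
cube. -/
theorem component_of_deleteEdges_thetaClass_isometric_partialCube {V : Type}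
    (H : SimpleGraph V) (hH : IsPartialCube H) (C : Set (Sym2 V))
    (hC : IsThetaClass H C) (c : (H.deleteEdges C).ConnectedComponent) :
    (∀ u v : c.supp, (H.induce c.supp).dist u v = H.dist u.val v.val) ∧
    IsPartialCube (H.induce c.supp) := by
  classical
  obtain ⟨hconn, d, φ, hinj, hdist⟩ := hH
  obtain ⟨e, he, hCdef⟩ := hC
  revert he hCdef
  induction e using Sym2.ind with
  | _ a b =>
  intro he hCdef
  have hd : ∀ v w : V, H.dist v w = hammingDist (φ v) (φ w) := fun v w =>
    (hdist v w).symm.trans (hyper_dist_eq _ _)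
  -- every edge determines a unique coordinate
  have hone : ∀ {u v : V}, H.Adj u v → ∃ i : Fin d, ∀ j, (φ u j ≠ φ v j ↔ j = i) := by
    intro u v huv
    have h1 : hammingDist (φ u) (φ v) = 1 := by
      rw [← hd u v]
      exact SimpleGraph.dist_eq_one_iff_adj.mpr huv
    obtain ⟨i, hi⟩ := Finset.card_eq_one.mp h1
    refine ⟨i, fun j => ?_⟩
    constructor
    · intro hj
      have : j ∈ (Finset.univ.filter fun j => φ u j ≠ φ v j) := by simp [hj]
      rw [hi] at this
      simpa using this
    · intro hj
      subst hj
      have : j ∈ (Finset.univ.filter fun j' => φ u j' ≠ φ v j') := by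
        rw [hi]; simp
      simpa using this
  obtain ⟨i, hia⟩ := hone (H.mem_edgeSet.mp he)
  -- canonical form of the DW relation
  have hDW : ∀ u v : V, DWRel H s(a, b) s(u, v) ↔
      (H.dist a u + H.dist b v ≠ H.dist a v + H.dist b u) := by
    intro u v
    constructor
    · rintro ⟨x, y, u', v', hxy, huv, hne⟩
      rw [Sym2.eq_iff] at hxy huv
      rcases hxy with ⟨rfl, rfl⟩ | ⟨rfl, rfl⟩ <;> rcases huv with ⟨rfl, rfl⟩ | ⟨rfl, rfl⟩ <;> omega
    · intro h
      exact ⟨a, b, u, v, rfl, rfl, h⟩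
  have hrw : ∀ u v : V, (H.dist a u + H.dist b v ≠ H.dist a v + H.dist b u) ↔
      ((∑ j, (d01 (φ a j) (φ u j) + d01 (φ b j) (φ v j))) ≠
        (∑ j, (d01 (φ a j) (φ v j) + d01 (φ b j) (φ u j)))) := by
    intro u v
    rw [hd a u, hd b v, hd a v, hd b u, hamming_eq_sum, hamming_eq_sum, hamming_eq_sum,
      hamming_eq_sum, ← Finset.sum_add_distrib, ← Finset.sum_add_distrib]
  have hterm : ∀ (u v : V) (j : Fin d), (φ a j = φ b j ∨ φ u j = φ v j) →
      d01 (φ a j) (φ u j) + d01 (φ b j) (φ v j) = d01 (φ a j) (φ v j) + d01 (φ b j) (φ u j) := by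
    intro u v j hj
    rcases hj with h | h <;> rw [h] <;> omega
  -- characterization of the Θ-class
  have hCkey : ∀ u v : V, s(u, v) ∈ C ↔ (H.Adj u v ∧ φ u i ≠ φ v i) := by
    intro u v
    rw [hCdef]
    simp only [Set.mem_setOf_eq, SimpleGraph.mem_edgeSet]
    constructor
    · rintro ⟨hadj, hdw⟩
      refine ⟨hadj, ?_⟩
      rw [hDW u v, hrw u v] at hdw
      by_contra hcon
      apply hdw
      refine Finset.sum_congr rfl fun j _ => hterm u v j ?_
      by_cases hab : φ a j = φ b j
      · exact Or.inl hab
      · have hj : j = i := (hia j).mp hab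
        subst hj
        exact Or.inr hcon
    · rintro ⟨hadj, hne⟩
      refine ⟨hadj, (hDW u v).mpr ((hrw u v).mpr ?_)⟩
      have hii : φ a i ≠ φ b i := (hia i).mpr rfl
      have hEe : (∑ j ∈ Finset.univ.erase i, (d01 (φ a j) (φ u j) + d01 (φ b j) (φ v j))) =
          (∑ j ∈ Finset.univ.erase i, (d01 (φ a j) (φ v j) + d01 (φ b j) (φ u j))) := by
        refine Finset.sum_congr rfl fun j hj => hterm u v j (Or.inl ?_)
        by_contra hc
        exact (Finset.mem_erase.mp hj).1 ((hia j).mp hc)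
      have h1 := Finset.add_sum_erase Finset.univ
        (fun j => d01 (φ a j) (φ u j) + d01 (φ b j) (φ v j)) (Finset.mem_univ i)
      have h2 := Finset.add_sum_erase Finset.univ
        (fun j => d01 (φ a j) (φ v j) + d01 (φ b j) (φ u j)) (Finset.mem_univ i)
      have hFi := d01_cross hii hne
      omega
  -- geodesics stay inside a "halfspace"
  have hgeo_supp : ∀ (u v : V) (p : H.Walk u v), p.length = H.dist u v →
      ∀ w ∈ p.support, H.dist u w + H.dist w v = H.dist u v := by
    intro u v p hp w hw
    have h1 := SimpleGraph.dist_le (p.takeUntil w hw)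
    have h2 := SimpleGraph.dist_le (p.dropUntil w hw)
    have h3 : (p.takeUntil w hw).length + (p.dropUntil w hw).length = p.length := by
      rw [← SimpleGraph.Walk.length_append, SimpleGraph.Walk.take_spec]
    have h4 := hconn.dist_triangle (u := u) (v := w) (w := v)
    omega
  have hcoord : ∀ (u v w : V), H.dist u w + H.dist w v = H.dist u v → φ u i = φ v i →
      φ w i = φ u i := by
    intro u v w hsum hiuv
    rw [hd u w, hd w v, hd u v, hamming_eq_sum, hamming_eq_sum, hamming_eq_sum,
      ← Finset.sum_add_distrib] at hsum
    have hpt : d01 (φ u i) (φ w i) + d01 (φ w i) (φ v i) = d01 (φ u i) (φ v i) := by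
      by_contra hc
      have hlt : (∑ j, d01 (φ u j) (φ v j)) <
          (∑ j, (d01 (φ u j) (φ w j) + d01 (φ w j) (φ v j))) :=
        Finset.sum_lt_sum (fun j _ => d01_triangle _ _ _)
          ⟨i, Finset.mem_univ i, lt_of_le_of_ne (d01_triangle _ _ _) (Ne.symm hc)⟩
      omega
    have h0 : d01 (φ u i) (φ v i) = 0 := by rw [hiuv]; simp [d01]
    have h1 : d01 (φ u i) (φ w i) = 0 := by omega
    exact (d01_eq_zero h1).symm
  have hgeo : ∀ u v : V, φ u i = φ v i →
      ∃ p : (H.deleteEdges C).Walk u v, p.length = H.dist u v := by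
    intro u v hiuv
    obtain ⟨p, hp⟩ := hconn.exists_walk_length_eq_dist u v
    have hsupp : ∀ w ∈ p.support, φ w i = φ u i := fun w hw =>
      hcoord u v w (hgeo_supp u v p hp w hw) hiuv
    have hedges : ∀ e' ∈ p.edges, e' ∉ C := by
      intro e'
      induction e' using Sym2.ind with
      | _ w1 w2 =>
        intro he' hmem
        have hw1 := hsupp w1 (p.fst_mem_support_of_mem_edges he')
        have hw2 := hsupp w2 (p.snd_mem_support_of_mem_edges he')
        have := ((hCkey w1 w2).mp hmem).2
        rw [hw1, hw2] at this
        exact this rfl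
    exact ⟨p.toDeleteEdges C hedges, by
      rw [SimpleGraph.Walk.toDeleteEdges, SimpleGraph.Walk.length_transfer]; exact hp⟩
  have hreach : ∀ u v : V, u ∈ c.supp → v ∈ c.supp → (H.deleteEdges C).Reachable u v := by
    intro u v hu hv
    rw [SimpleGraph.ConnectedComponent.mem_supp_iff] at hu hv
    exact SimpleGraph.ConnectedComponent.exact (hu.trans hv.symm)
  have hsame : ∀ u v : V, (H.deleteEdges C).Reachable u v → φ u i = φ v i := by
    intro u v h
    obtain ⟨p⟩ := h
    induction p with
    | nil => rfl
    | @cons x y z h q ih =>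
      have h' := SimpleGraph.deleteEdges_adj.mp h
      have hxy : φ x i = φ y i := by
        by_contra hc
        exact h'.2 ((hCkey x y).mpr ⟨h'.1, hc⟩)
      exact hxy.trans ih
  have hwalk_supp : ∀ (u v : V) (p : (H.deleteEdges C).Walk u v), u ∈ c.supp →
      ∀ w ∈ p.support, w ∈ c.supp := by
    intro u v p hu w hw
    rw [SimpleGraph.ConnectedComponent.mem_supp_iff] at hu ⊢
    rw [← hu]
    exact SimpleGraph.ConnectedComponent.sound ((p.takeUntil w hw).reachable).symm
  have hdist_eq : ∀ u v : c.supp, (H.induce c.supp).dist u v = H.dist u.val v.val := by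
    rintro ⟨u, hu⟩ ⟨v, hv⟩
    show (H.induce c.supp).dist ⟨u, hu⟩ ⟨v, hv⟩ = H.dist u v
    have hiuv : φ u i = φ v i := hsame u v (hreach u v hu hv)
    obtain ⟨p, hp⟩ := hgeo u v hiuv
    obtain ⟨q, hq⟩ := walk_toInduce (SimpleGraph.deleteEdges_le (s := C)) c.supp p (hwalk_supp u v p hu) hu hv
    refine le_antisymm ?_ ?_
    · have := SimpleGraph.dist_le q
      omega
    · obtain ⟨r, hr⟩ := SimpleGraph.Reachable.exists_walk_length_eq_dist
        (⟨q⟩ : (H.induce c.supp).Reachable ⟨u, hu⟩ ⟨v, hv⟩)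
      have hmap := SimpleGraph.dist_le (r.map (SimpleGraph.Embedding.induce c.supp).toHom)
      rw [SimpleGraph.Walk.length_map] at hmap
      exact hr ▸ hmap
  refine ⟨hdist_eq, ?_, d, fun x => φ x.val, hinj.comp Subtype.val_injective, fun x y => ?_⟩
  · have hne : Nonempty c.supp := by
      obtain ⟨w, hw⟩ := c.exists_rep
      exact ⟨⟨w, by rw [SimpleGraph.ConnectedComponent.mem_supp_iff]; exact hw⟩⟩
    haveI := hne
    refine ⟨?_⟩
    rintro ⟨u, hu⟩ ⟨v, hv⟩
    obtain ⟨p⟩ := hreach u v hu hv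
    obtain ⟨q, _⟩ := walk_toInduce (SimpleGraph.deleteEdges_le (s := C)) c.supp p (hwalk_supp u v p hu) hu hv
    exact ⟨q⟩
  · rw [hdist_eq x y]
    exact hdist x.val y.val
end

section
/- For every n ≥ 3, the gear graph G_n on 2n+1 vertices is a partial cube. -/
open SimpleGraph

/-- The gear graph (cogwheel) `G_n` on `2n+1` vertices: a cycle of length `2n`
(the rim) together with a hub (`none`) adjacent to every second vertex of the
cycle. -/
def gearGraph (n : ℕ) : SimpleGraph (Option (Fin (2 * n))) :=
  SimpleGraph.fromRel fun a b =>
    match a, b with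
    | some i, some j => (j : ℕ) = ((i : ℕ) + 1) % (2 * n)
    | none, some i => (i : ℕ) % 2 = 0
    | _, _ => False

namespace GearAux

lemma ham_def {d : ℕ} (x y : Fin d → Bool) :
    hammingDist x y = (Finset.univ.filter fun i => x i ≠ y i).card := rfl

lemma ham_eq_card {m : ℕ} (x y : Fin m → Bool) (s : Finset (Fin m))
    (h : ∀ j, (x j ≠ y j) ↔ j ∈ s) :
    hammingDist x y = s.card := by
  rw [ham_def]
  congr 1
  ext j
  simp [h j]

lemma hammingDist_le_walk {V : Type*} {G : SimpleGraph V} {d : ℕ}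
    (f : V → (Fin d → Bool)) (hf : ∀ a b, G.Adj a b → hammingDist (f a) (f b) = 1) :
    ∀ {u v : V} (p : G.Walk u v), hammingDist (f u) (f v) ≤ p.length := by
  intro u v p
  induction p with
  | nil => simp
  | @cons a b c h p ih =>
    have h1 := hf a b h
    have h2 := hammingDist_triangle (f a) (f b) (f c)
    rw [SimpleGraph.Walk.length_cons]
    omega

lemma exists_walk_hamming {d : ℕ} (x y : Fin d → Bool) :
    ∃ p : (hypercubeGraph d).Walk x y, p.length = hammingDist x y := by
  generalize hm : hammingDist x y = m
  induction m generalizing x with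
  | zero =>
    have hxy : x = y := by
      funext j
      by_contra hj
      have : j ∈ (Finset.univ.filter fun i => x i ≠ y i) := by simp [hj]
      rw [ham_def, Finset.card_eq_zero] at hm
      simp [hm] at this
    subst hxy
    exact ⟨SimpleGraph.Walk.nil, by simp⟩
  | succ m ih =>
    have hne : (Finset.univ.filter fun i => x i ≠ y i).Nonempty := by
      rw [← Finset.card_pos, ← ham_def, hm]; omega
    obtain ⟨j, hj⟩ := hne
    have hj' : x j ≠ y j := by simpa using hj
    set x' := Function.update x j (y j) with hx'def
    have hx' : ∀ i, x' i = if i = j then y j else x i := fun i => Function.update_apply x j (y j) i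
    have h1 : hammingDist x x' = 1 := by
      rw [ham_eq_card x x' {j} (fun i => ?_), Finset.card_singleton]
      by_cases h : i = j <;> simp [hx', h, hj']
    have h2 : hammingDist x' y = m := by
      have : (Finset.univ.filter fun i => x' i ≠ y i)
          = (Finset.univ.filter fun i => x i ≠ y i).erase j := by
        ext i
        by_cases h : i = j <;> simp [hx', h]
      rw [ham_def, this, Finset.card_erase_of_mem (by simpa using hj), ← ham_def, hm]
      omega
    obtain ⟨p, hp⟩ := ih x' h2
    refine ⟨SimpleGraph.Walk.cons (h1 : (hypercubeGraph d).Adj x x') p, ?_⟩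
    show p.length + 1 = m + 1; rw [hp]

lemma hyp_dist_eq {d : ℕ} (x y : Fin d → Bool) :
    (hypercubeGraph d).dist x y = hammingDist x y := by
  obtain ⟨p, hp⟩ := exists_walk_hamming x y
  refine le_antisymm (hp ▸ SimpleGraph.dist_le p) ?_
  obtain ⟨q, hq⟩ := (Reachable.exists_walk_length_eq_dist ⟨p⟩ :
    ∃ q : (hypercubeGraph d).Walk x y, q.length = (hypercubeGraph d).dist x y)
  rw [← hq]
  exact hammingDist_le_walk id (fun a b h => h) q

def gearEmb (n : ℕ) : Option (Fin (2*n)) → Fin n → Bool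
  | none => fun _ => false
  | some i => fun j => decide ((j:ℕ) = (i:ℕ)/2 ∨ (j:ℕ) = ((i:ℕ)+1)/2 % n)

lemma emb_none (n : ℕ) (j : Fin n) : gearEmb n none j = false := rfl

lemma emb_even {n : ℕ} {i : Fin (2*n)} {k : ℕ} (h : (i:ℕ) = 2*k) (hk : k < n) (j : Fin n) :
    gearEmb n (some i) j = decide ((j:ℕ) = k) := by
  have h1 : (i:ℕ)/2 = k := by omega
  have h2 : ((i:ℕ)+1)/2 % n = k := by
    rw [show ((i:ℕ)+1)/2 = k by omega, Nat.mod_eq_of_lt hk]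
  simp [gearEmb, h1, h2]

lemma emb_odd {n : ℕ} {i : Fin (2*n)} {k s : ℕ} (h : (i:ℕ) = 2*k+1) (hs : s = (k+1) % n)
    (j : Fin n) :
    gearEmb n (some i) j = decide ((j:ℕ) = k ∨ (j:ℕ) = s) := by
  have h1 : (i:ℕ)/2 = k := by omega
  have h2 : ((i:ℕ)+1)/2 = k+1 := by omega
  simp [gearEmb, h1, h2, hs]

lemma succ_char {n k : ℕ} (hk : k < n) :
    (k+1) % n < n ∧ ((k+1) % n = k+1 ∨ ((k+1) = n ∧ (k+1) % n = 0)) := by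
  rcases Nat.lt_or_ge (k+1) n with h|h
  · rw [Nat.mod_eq_of_lt h]; omega
  · have hkn : k+1 = n := by omega
    rw [hkn, Nat.mod_self]; omega

lemma card3 {m : ℕ} (a b c : Fin m) (hab : a ≠ b) (hac : a ≠ c) (hbc : b ≠ c) :
    ({a,b,c} : Finset (Fin m)).card = 3 := by
  rw [Finset.card_insert_of_notMem (by simp [hab, hac]), Finset.card_pair hbc]

lemma card4 {m : ℕ} (a b c d : Fin m) (hab : a ≠ b) (hac : a ≠ c) (had : a ≠ d)
    (hbc : b ≠ c) (hbd : b ≠ d) (hcd : c ≠ d) :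
    ({a,b,c,d} : Finset (Fin m)).card = 4 := by
  rw [Finset.card_insert_of_notMem (by simp [hab, hac, had]),
    Finset.card_insert_of_notMem (by simp [hbc, hbd]), Finset.card_pair hcd]

-- hub to even rim vertex
lemma hub_ham_even {n : ℕ} {j : Fin (2*n)} {l : ℕ} (hjl : (j:ℕ) = 2*l) (hl : l < n) :
    hammingDist (gearEmb n none) (gearEmb n (some j)) = 1 := by
  rw [ham_eq_card _ _ {(⟨l, hl⟩ : Fin n)} (fun j' => ?_), Finset.card_singleton]
  rw [emb_none, emb_even hjl hl j']
  simp only [ne_eq, Finset.mem_singleton, Fin.ext_iff]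
  simp only [decide_eq_true_eq, Bool.false_eq, decide_eq_false_iff_not, not_not]

-- hub to odd rim vertex
lemma hub_ham_odd {n : ℕ} (hn : 3 ≤ n) {j : Fin (2*n)} {l : ℕ} (hjl : (j:ℕ) = 2*l+1)
    (hl : l < n) :
    hammingDist (gearEmb n none) (gearEmb n (some j)) = 2 := by
  obtain ⟨hs1, hs2⟩ := succ_char hl
  rw [ham_eq_card _ _ {(⟨l, hl⟩ : Fin n), (⟨(l+1)%n, hs1⟩ : Fin n)} (fun j' => ?_),
    Finset.card_pair (by simp only [ne_eq, Fin.ext_iff]; omega)]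
  rw [emb_none, emb_odd hjl rfl j']
  simp only [ne_eq, Finset.mem_insert, Finset.mem_singleton, Fin.ext_iff]
  simp only [decide_eq_true_eq, Bool.false_eq, decide_eq_false_iff_not, not_not]

-- images of adjacent rim vertices differ in one coordinate
lemma rim_ham {n : ℕ} (hn : 3 ≤ n) (i j : Fin (2*n)) (h : (j:ℕ) = ((i:ℕ)+1) % (2*n)) :
    hammingDist (gearEmb n (some i)) (gearEmb n (some j)) = 1 := by
  have hi := i.isLt
  have hj := j.isLt
  set k := (i:ℕ)/2 with hk
  have hkn : k < n := by omega
  obtain ⟨hs1, hs2⟩ := succ_char hkn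
  rcases (show (i:ℕ) = 2*k ∨ (i:ℕ) = 2*k+1 by omega) with hik|hik
  · -- i even, j = 2k+1
    have hjv : (j:ℕ) = 2*k+1 := by
      rw [h, show (i:ℕ)+1 = 2*k+1 by omega, Nat.mod_eq_of_lt (by omega)]
    rw [ham_eq_card _ _ {(⟨(k+1)%n, hs1⟩ : Fin n)} (fun j' => ?_), Finset.card_singleton]
    rw [emb_even hik hkn j', emb_odd hjv rfl j']
    simp only [ne_eq, decide_eq_decide, Finset.mem_singleton, Fin.ext_iff]
    omega
  · -- i odd, j = 2*((k+1) % n)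
    have hjv : (j:ℕ) = 2*((k+1)%n) := by
      rcases hs2 with hs|⟨hs, hs'⟩
      · rw [h, show (i:ℕ)+1 = 2*(k+1) by omega, Nat.mod_eq_of_lt (by omega)]; omega
      · rw [h, show (i:ℕ)+1 = 2*n by omega, Nat.mod_self]; omega
    rw [ham_eq_card _ _ {(⟨k, hkn⟩ : Fin n)} (fun j' => ?_), Finset.card_singleton]
    rw [emb_odd hik rfl j', emb_even hjv hs1 j']
    simp only [ne_eq, decide_eq_decide, Finset.mem_singleton, Fin.ext_iff]
    omega

lemma adj_pres {n : ℕ} (hn : 3 ≤ n) : ∀ {v w : Option (Fin (2*n))}, (gearGraph n).Adj v w →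
    hammingDist (gearEmb n v) (gearEmb n w) = 1 := by
  intro v w h
  rw [gearGraph, SimpleGraph.fromRel_adj] at h
  obtain ⟨hne, h⟩ := h
  match v, w with
  | none, none => simp at h
  | none, some j =>
    have hj0 : (j:ℕ) % 2 = 0 := by simpa using h
    exact hub_ham_even (l := (j:ℕ)/2) (by omega) (by have := j.isLt; omega)
  | some i, none =>
    have hi0 : (i:ℕ) % 2 = 0 := by simpa using h
    rw [hammingDist_comm]
    exact hub_ham_even (l := (i:ℕ)/2) (by omega) (by have := i.isLt; omega)
  | some i, some j =>
    rcases h with h|h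
    · exact rim_ham hn i j h
    · rw [hammingDist_comm]; exact rim_ham hn j i h

lemma adj_hub {n : ℕ} (j : Fin (2*n)) (h : (j:ℕ) % 2 = 0) :
    (gearGraph n).Adj none (some j) := by
  rw [gearGraph, SimpleGraph.fromRel_adj]
  exact ⟨by simp, Or.inl h⟩

lemma adj_rim {n : ℕ} (a b : Fin (2*n)) (h : (b:ℕ) = ((a:ℕ)+1) % (2*n)) :
    (gearGraph n).Adj (some a) (some b) := by
  have ha := a.isLt
  have hb := b.isLt
  have hne : (a:ℕ) ≠ (b:ℕ) := by
    rcases Nat.lt_or_ge ((a:ℕ)+1) (2*n) with h'|h'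
    · rw [Nat.mod_eq_of_lt h'] at h; omega
    · rw [show (a:ℕ)+1 = 2*n by omega, Nat.mod_self] at h; omega
  rw [gearGraph, SimpleGraph.fromRel_adj]
  refine ⟨?_, Or.inl h⟩
  intro hab
  cases hab
  exact hne rfl

lemma ee_case {n : ℕ} (hn : 3 ≤ n) (i j : Fin (2*n)) {k l : ℕ} (hik : (i:ℕ) = 2*k)
    (hjl : (j:ℕ) = 2*l) (hk : k < n) (hl : l < n) (hne : k ≠ l) :
    (gearGraph n).dist (some i) (some j)
      ≤ hammingDist (gearEmb n (some i)) (gearEmb n (some j)) := by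
  have hham : hammingDist (gearEmb n (some i)) (gearEmb n (some j)) = 2 := by
    rw [ham_eq_card _ _ {⟨k,hk⟩, ⟨l,hl⟩}
      (fun j' => ?_), Finset.card_pair (by simp only [ne_eq, Fin.mk.injEq]; omega)]
    rw [emb_even hik hk j', emb_even hjl hl j']
    simp only [ne_eq, decide_eq_decide, Finset.mem_insert, Finset.mem_singleton, Fin.ext_iff]
    omega
  rw [hham]
  have h1 : (gearGraph n).Adj (some i) none := (adj_hub i (by omega)).symm
  have h2 : (gearGraph n).Adj none (some j) := adj_hub j (by omega)
  exact le_trans (SimpleGraph.dist_le (Walk.cons h1 (Walk.cons h2 Walk.nil))) (by simp)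

lemma eo_case {n : ℕ} (hn : 3 ≤ n) (i j : Fin (2*n)) {k l : ℕ} (hik : (i:ℕ) = 2*k)
    (hjl : (j:ℕ) = 2*l+1) (hk : k < n) (hl : l < n) :
    (gearGraph n).dist (some i) (some j)
      ≤ hammingDist (gearEmb n (some i)) (gearEmb n (some j)) := by
  have hi := i.isLt
  have hj := j.isLt
  obtain ⟨hs1, hs2⟩ := succ_char hl
  by_cases hlk : l = k
  · have hjv : (j:ℕ) = ((i:ℕ)+1) % (2*n) := by
      rw [show (i:ℕ)+1 = 2*l+1 by omega, Nat.mod_eq_of_lt (by omega)]; omega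
    rw [rim_ham hn i j hjv]
    exact le_trans (SimpleGraph.dist_le (adj_rim i j hjv).toWalk) (by simp)
  by_cases hk1 : k = (l+1)%n
  · have hiv : (i:ℕ) = ((j:ℕ)+1) % (2*n) := by
      rcases hs2 with hs|⟨hs,hs'⟩
      · rw [show (j:ℕ)+1 = 2*(l+1) by omega, Nat.mod_eq_of_lt (by omega)]; omega
      · rw [show (j:ℕ)+1 = 2*n by omega, Nat.mod_self]; omega
    rw [hammingDist_comm, rim_ham hn j i hiv]
    exact le_trans (SimpleGraph.dist_le (adj_rim j i hiv).symm.toWalk) (by simp)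
  · have hham : hammingDist (gearEmb n (some i)) (gearEmb n (some j)) = 3 := by
      rw [ham_eq_card _ _ {⟨k,hk⟩, ⟨l,hl⟩, ⟨(l+1)%n, hs1⟩} (fun j' => ?_),
        card3 _ _ _ (by simp only [ne_eq, Fin.mk.injEq]; omega)
          (by simp only [ne_eq, Fin.mk.injEq]; omega)
          (by simp only [ne_eq, Fin.mk.injEq]; omega)]
      rw [emb_even hik hk j', emb_odd hjl rfl j']
      simp only [ne_eq, decide_eq_decide, Finset.mem_insert, Finset.mem_singleton, Fin.ext_iff]
      omega
    rw [hham]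
    have h1 : (gearGraph n).Adj (some i) none := (adj_hub i (by omega)).symm
    have h2 : (gearGraph n).Adj none (some (⟨2*l, by omega⟩ : Fin (2*n))) :=
      adj_hub _ (by show 2*l % 2 = 0; omega)
    have h3 : (gearGraph n).Adj (some (⟨2*l, by omega⟩ : Fin (2*n))) (some j) :=
      adj_rim _ j (by show (j:ℕ) = (2*l+1) % (2*n); rw [Nat.mod_eq_of_lt (by omega)]; omega)
    exact le_trans
      (SimpleGraph.dist_le (Walk.cons h1 (Walk.cons h2 (Walk.cons h3 Walk.nil)))) (by simp)

lemma oo_near {n : ℕ} (hn : 3 ≤ n) (i j : Fin (2*n)) {k l : ℕ} (hik : (i:ℕ) = 2*k+1)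
    (hjl : (j:ℕ) = 2*l+1) (hk : k < n) (hl : l < n) (hadj : l = (k+1)%n) :
    (gearGraph n).dist (some i) (some j)
      ≤ hammingDist (gearEmb n (some i)) (gearEmb n (some j)) := by
  have hi := i.isLt
  have hj := j.isLt
  obtain ⟨hsk1, hsk2⟩ := succ_char hk
  obtain ⟨hsl1, hsl2⟩ := succ_char hl
  have hham : hammingDist (gearEmb n (some i)) (gearEmb n (some j)) = 2 := by
    rw [ham_eq_card _ _ {⟨k,hk⟩, ⟨(l+1)%n, hsl1⟩} (fun j' => ?_),
      Finset.card_pair (by simp only [ne_eq, Fin.mk.injEq]; omega)]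
    rw [emb_odd hik rfl j', emb_odd hjl rfl j']
    simp only [ne_eq, decide_eq_decide, Finset.mem_insert, Finset.mem_singleton, Fin.ext_iff]
    omega
  rw [hham]
  have hbv : ((i:ℕ)+1) % (2*n) = 2*l := by
    rcases hsk2 with hs|⟨hs,hs'⟩
    · rw [show (i:ℕ)+1 = 2*(k+1) by omega, Nat.mod_eq_of_lt (by omega)]; omega
    · rw [show (i:ℕ)+1 = 2*n by omega, Nat.mod_self]; omega
  have h1 : (gearGraph n).Adj (some i) (some (⟨2*l, by omega⟩ : Fin (2*n))) :=
    adj_rim i _ (by show 2*l = ((i:ℕ)+1) % (2*n); omega)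
  have h2 : (gearGraph n).Adj (some (⟨2*l, by omega⟩ : Fin (2*n))) (some j) :=
    adj_rim _ j (by show (j:ℕ) = (2*l+1) % (2*n); rw [Nat.mod_eq_of_lt (by omega)]; omega)
  exact le_trans (SimpleGraph.dist_le (Walk.cons h1 (Walk.cons h2 Walk.nil))) (by simp)

lemma oo_far {n : ℕ} (hn : 3 ≤ n) (i j : Fin (2*n)) {k l : ℕ} (hik : (i:ℕ) = 2*k+1)
    (hjl : (j:ℕ) = 2*l+1) (hk : k < n) (hl : l < n) (hne : k ≠ l)
    (h1 : l ≠ (k+1)%n) (h2 : k ≠ (l+1)%n) :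
    (gearGraph n).dist (some i) (some j)
      ≤ hammingDist (gearEmb n (some i)) (gearEmb n (some j)) := by
  have hi := i.isLt
  have hj := j.isLt
  obtain ⟨hsk1, hsk2⟩ := succ_char hk
  obtain ⟨hsl1, hsl2⟩ := succ_char hl
  have hham : hammingDist (gearEmb n (some i)) (gearEmb n (some j)) = 4 := by
    rw [ham_eq_card _ _ {⟨k,hk⟩, ⟨(k+1)%n, hsk1⟩, ⟨l,hl⟩, ⟨(l+1)%n, hsl1⟩} (fun j' => ?_),
      card4 _ _ _ _ (by simp only [ne_eq, Fin.mk.injEq]; omega)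
        (by simp only [ne_eq, Fin.mk.injEq]; omega)
        (by simp only [ne_eq, Fin.mk.injEq]; omega)
        (by simp only [ne_eq, Fin.mk.injEq]; omega)
        (by simp only [ne_eq, Fin.mk.injEq]; omega)
        (by simp only [ne_eq, Fin.mk.injEq]; omega)]
    rw [emb_odd hik rfl j', emb_odd hjl rfl j']
    simp only [ne_eq, decide_eq_decide, Finset.mem_insert, Finset.mem_singleton, Fin.ext_iff]
    omega
  rw [hham]
  have e1 : (gearGraph n).Adj (some i) (some (⟨2*k, by omega⟩ : Fin (2*n))) :=
    (adj_rim _ i (by show (i:ℕ) = (2*k+1) % (2*n); rw [Nat.mod_eq_of_lt (by omega)]; omega)).symm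
  have e2 : (gearGraph n).Adj (some (⟨2*k, by omega⟩ : Fin (2*n))) none :=
    (adj_hub _ (by show 2*k % 2 = 0; omega)).symm
  have e3 : (gearGraph n).Adj none (some (⟨2*l, by omega⟩ : Fin (2*n))) :=
    adj_hub _ (by show 2*l % 2 = 0; omega)
  have e4 : (gearGraph n).Adj (some (⟨2*l, by omega⟩ : Fin (2*n))) (some j) :=
    adj_rim _ j (by show (j:ℕ) = (2*l+1) % (2*n); rw [Nat.mod_eq_of_lt (by omega)]; omega)
  exact le_trans
    (SimpleGraph.dist_le (Walk.cons e1 (Walk.cons e2 (Walk.cons e3 (Walk.cons e4 Walk.nil)))))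
    (by simp)

lemma key {n : ℕ} (hn : 3 ≤ n) (v w : Option (Fin (2*n))) :
    (gearGraph n).dist v w ≤ hammingDist (gearEmb n v) (gearEmb n w) := by
  have hub_case : ∀ j : Fin (2*n), (gearGraph n).dist none (some j)
      ≤ hammingDist (gearEmb n none) (gearEmb n (some j)) := by
    intro j
    have hj := j.isLt
    set l := (j:ℕ)/2 with hldef
    have hl : l < n := by omega
    rcases (show (j:ℕ) = 2*l ∨ (j:ℕ) = 2*l+1 by omega) with hjl|hjl
    · rw [hub_ham_even hjl hl]
      exact le_trans (SimpleGraph.dist_le (adj_hub j (by omega)).toWalk) (by simp)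
    · rw [hub_ham_odd hn hjl hl]
      have h1 := adj_hub (n := n) (⟨2*l, by omega⟩ : Fin (2*n)) (by show 2*l % 2 = 0; omega)
      have h2 := adj_rim (⟨2*l, by omega⟩ : Fin (2*n)) j
        (by show (j:ℕ) = (2*l+1) % (2*n); rw [Nat.mod_eq_of_lt (by omega)]; omega)
      exact le_trans (SimpleGraph.dist_le (Walk.cons h1 (Walk.cons h2 Walk.nil))) (by simp)
  match v, w with
  | none, none => simp [SimpleGraph.dist_self]
  | none, some j => exact hub_case j
  | some i, none =>
    rw [SimpleGraph.dist_comm, hammingDist_comm]; exact hub_case i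
  | some i, some j =>
    have hi := i.isLt
    have hj := j.isLt
    set k := (i:ℕ)/2 with hkdef
    set l := (j:ℕ)/2 with hldef
    have hk : k < n := by omega
    have hl : l < n := by omega
    rcases (show (i:ℕ) = 2*k ∨ (i:ℕ) = 2*k+1 by omega) with hik|hik <;>
      rcases (show (j:ℕ) = 2*l ∨ (j:ℕ) = 2*l+1 by omega) with hjl|hjl
    · by_cases hkl : k = l
      · have hij : i = j := Fin.ext (by omega)
        rw [hij]
        simp [SimpleGraph.dist_self]
      · exact ee_case hn i j hik hjl hk hl hkl
    · exact eo_case hn i j hik hjl hk hl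
    · rw [SimpleGraph.dist_comm, hammingDist_comm]
      exact eo_case hn j i hjl hik hl hk
    · by_cases hkl : k = l
      · have hij : i = j := Fin.ext (by omega)
        rw [hij]
        simp [SimpleGraph.dist_self]
      by_cases ha1 : l = (k+1)%n
      · exact oo_near hn i j hik hjl hk hl ha1
      by_cases ha2 : k = (l+1)%n
      · rw [SimpleGraph.dist_comm, hammingDist_comm]
        exact oo_near hn j i hjl hik hl hk ha2
      · exact oo_far hn i j hik hjl hk hl hkl ha1 ha2

lemma gear_conn {n : ℕ} (hn : 1 ≤ n) : (gearGraph n).Connected := by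
  have hreach : ∀ v : Option (Fin (2*n)), (gearGraph n).Reachable v none := by
    intro v
    match v with
    | none => exact SimpleGraph.Reachable.refl _
    | some i =>
      have hi := i.isLt
      rcases Nat.even_or_odd (i:ℕ) with he|ho
      · exact ((adj_hub i (Nat.even_iff.mp he)).symm).reachable
      · have h0 : (i:ℕ) % 2 = 1 := Nat.odd_iff.mp ho
        set a : Fin (2*n) := ⟨(i:ℕ)-1, by omega⟩ with ha
        have h1 : (gearGraph n).Adj (some a) (some i) := adj_rim a i (by
          show (i:ℕ) = ((i:ℕ)-1+1) % (2*n)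
          rw [show (i:ℕ)-1+1 = (i:ℕ) by omega, Nat.mod_eq_of_lt hi])
        exact (h1.symm.reachable).trans
          ((adj_hub a (by show ((i:ℕ)-1) % 2 = 0; omega)).symm).reachable
  rw [SimpleGraph.connected_iff]
  exact ⟨fun u v => (hreach u).trans (hreach v).symm, ⟨none⟩⟩

end GearAux

open GearAux

/-- For every `n ≥ 3`, the gear graph `G_n` on `2n+1` vertices is a partial
cube. -/
theorem gearGraph_isPartialCube (n : ℕ) (hn : 3 ≤ n) :
    IsPartialCube (gearGraph n) := by
  have hc : (gearGraph n).Connected := gear_conn (by omega)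
  refine ⟨hc, n, gearEmb n, ?_, ?_⟩
  · intro v w h
    have hle := key hn v w
    rw [h, hammingDist_self] at hle
    exact (hc.dist_eq_zero_iff).mp (Nat.le_zero.mp hle)
  · intro v w
    rw [hyp_dist_eq]
    refine le_antisymm ?_ (key hn v w)
    obtain ⟨q, hq⟩ := (hc.preconnected v w).exists_walk_length_eq_dist
    rw [← hq]
    exact hammingDist_le_walk (gearEmb n) (fun a b h => adj_pres hn h) q
end
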